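/- Let w₁₂, w₃₄, w₅₆ : (0,∞) → (0,∞) be decreasing functions with w₁₂(r)·w₃₄(r)·w₅₆(r) = r^{-2} for all r > 0. Then there is an absolute constant C > 0 such that for all measurable ψ₁, …, ψ₆ : (0,∞) → ℂ, |M₆(ψ₁,…,ψ₆)| ≤ C ‖w₁₂·ψ₁ψ₂‖_{L¹} ‖w₃₄·ψ₃ψ₄‖_{L¹} ‖w₅₆·ψ₅ψ₆‖_{L¹} whenever the right-hand side is finite. -/

import Mathlib

open MeasureTheory Set
open scoped ENNReal

/-- The measure `2π r dr` on `(0,∞)`. -/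
noncomputable def rmeas : Measure ℝ :=
  (volume.restrict (Set.Ioi (0:ℝ))).withDensity (fun r => ENNReal.ofReal (2 * Real.pi * r))

/-- `Re(conj ψ₁ ψ₂)(r)`. -/
noncomputable def Re2 (ψ₁ ψ₂ : ℝ → ℂ) (r : ℝ) : ℝ := ((starRingEnd ℂ) (ψ₁ r) * ψ₂ r).re

/-- `A_θ[ψ₁,ψ₂](r) = -(1/2)∫₀^r Re(conj ψ₁ ψ₂)(r') r' dr'`. -/
noncomputable def Atheta2 (ψ₁ ψ₂ : ℝ → ℂ) (r : ℝ) : ℝ :=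
  -(1/2) * ∫ t in (0:ℝ)..r, Re2 ψ₁ ψ₂ t * t

/-- `M₆(ψ₁,…,ψ₆) = (1/2)·2π∫₀^∞ r^{-2} A_θ[ψ₁,ψ₂] A_θ[ψ₃,ψ₄] Re(conj ψ₅ ψ₆) r dr`. -/
noncomputable def M6 (ψ₁ ψ₂ ψ₃ ψ₄ ψ₅ ψ₆ : ℝ → ℂ) : ℝ :=
  (1/2) * (2 * Real.pi * ∫ r in Set.Ioi (0:ℝ),
    (r ^ 2)⁻¹ * Atheta2 ψ₁ ψ₂ r * Atheta2 ψ₃ ψ₄ r * Re2 ψ₅ ψ₆ r * r)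

noncomputable def gfun (w : ℝ → ℝ) (ψ₁ ψ₂ : ℝ → ℂ) (r : ℝ) : ℝ :=
  ‖ψ₁ r * ψ₂ r‖ * r * w r

noncomputable def Lint (w : ℝ → ℝ) (ψ₁ ψ₂ : ℝ → ℂ) : ℝ≥0∞ :=
  ∫⁻ r in Set.Ioi (0:ℝ), ENNReal.ofReal (gfun w ψ₁ ψ₂ r)

lemma abs_Re2_le (ψ₁ ψ₂ : ℝ → ℂ) (r : ℝ) :
    |Re2 ψ₁ ψ₂ r| ≤ ‖ψ₁ r * ψ₂ r‖ := by
  have h := Complex.abs_re_le_norm ((starRingEnd ℂ) (ψ₁ r) * ψ₂ r)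
  calc |Re2 ψ₁ ψ₂ r| ≤ ‖(starRingEnd ℂ) (ψ₁ r) * ψ₂ r‖ := h
  _ = ‖ψ₁ r * ψ₂ r‖ := by
      rw [norm_mul, Complex.norm_conj, ← norm_mul]

lemma atheta_bound {w : ℝ → ℝ} (hpos : ∀ r, 0 < r → 0 < w r)
    (hanti : ∀ r s, 0 < r → r ≤ s → w s ≤ w r) (ψ₁ ψ₂ : ℝ → ℂ) {r : ℝ} (hr : 0 < r) :
    ENNReal.ofReal |Atheta2 ψ₁ ψ₂ r| ≤
      ENNReal.ofReal (2⁻¹ * (w r)⁻¹) * Lint w ψ₁ ψ₂ := by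
  have h1 : |Atheta2 ψ₁ ψ₂ r| = 2⁻¹ * |∫ t in Ioc (0:ℝ) r, Re2 ψ₁ ψ₂ t * t| := by
    rw [Atheta2, intervalIntegral.integral_of_le hr.le, abs_mul]
    norm_num
  have h2 : ENNReal.ofReal |∫ t in Ioc (0:ℝ) r, Re2 ψ₁ ψ₂ t * t| ≤
      ∫⁻ t in Ioc (0:ℝ) r, ENNReal.ofReal ‖Re2 ψ₁ ψ₂ t * t‖ := by
    refine le_trans (ENNReal.ofReal_le_ofReal ?_) ENNReal.ofReal_toReal_le
    simpa [Real.norm_eq_abs] using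
      norm_integral_le_lintegral_norm (μ := volume.restrict (Ioc (0:ℝ) r))
        (fun t => Re2 ψ₁ ψ₂ t * t)
  have h3 : (∫⁻ t in Ioc (0:ℝ) r, ENNReal.ofReal ‖Re2 ψ₁ ψ₂ t * t‖) ≤
      ∫⁻ t in Ioc (0:ℝ) r, ENNReal.ofReal ((w r)⁻¹) * ENNReal.ofReal (gfun w ψ₁ ψ₂ t) := by
    refine lintegral_mono_ae ((ae_restrict_iff' measurableSet_Ioc).2 (.of_forall fun t ht => ?_))
    have ht0 : 0 < t := ht.1
    have hwt := hpos t ht0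
    have hwr := hpos r hr
    have hw : w r ≤ w t := hanti t r ht0 ht.2
    rw [← ENNReal.ofReal_mul (by positivity)]
    refine ENNReal.ofReal_le_ofReal ?_
    have hre := abs_Re2_le ψ₁ ψ₂ t
    have hnorm : ‖Re2 ψ₁ ψ₂ t * t‖ = |Re2 ψ₁ ψ₂ t| * t := by
      rw [Real.norm_eq_abs, abs_mul, abs_of_pos ht0]
    rw [hnorm, gfun]
    have h4 : (1:ℝ) ≤ (w r)⁻¹ * w t := by
      rw [← inv_mul_cancel₀ hwr.ne']
      exact mul_le_mul_of_nonneg_left hw (by positivity)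
    calc |Re2 ψ₁ ψ₂ t| * t ≤ ‖ψ₁ t * ψ₂ t‖ * t :=
        mul_le_mul_of_nonneg_right hre ht0.le
      _ = ‖ψ₁ t * ψ₂ t‖ * t * 1 := by ring
      _ ≤ ‖ψ₁ t * ψ₂ t‖ * t * ((w r)⁻¹ * w t) := by
          refine mul_le_mul_of_nonneg_left h4 (by positivity)
      _ = (w r)⁻¹ * (‖ψ₁ t * ψ₂ t‖ * t * w t) := by ring
  have h5 : (∫⁻ t in Ioc (0:ℝ) r, ENNReal.ofReal ((w r)⁻¹) * ENNReal.ofReal (gfun w ψ₁ ψ₂ t))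
      = ENNReal.ofReal ((w r)⁻¹) * ∫⁻ t in Ioc (0:ℝ) r, ENNReal.ofReal (gfun w ψ₁ ψ₂ t) :=
    lintegral_const_mul' _ _ ENNReal.ofReal_ne_top
  have h6 : (∫⁻ t in Ioc (0:ℝ) r, ENNReal.ofReal (gfun w ψ₁ ψ₂ t)) ≤ Lint w ψ₁ ψ₂ :=
    lintegral_mono_set Ioc_subset_Ioi_self
  calc ENNReal.ofReal |Atheta2 ψ₁ ψ₂ r|
      = ENNReal.ofReal 2⁻¹ * ENNReal.ofReal |∫ t in Ioc (0:ℝ) r, Re2 ψ₁ ψ₂ t * t| := by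
        rw [h1, ENNReal.ofReal_mul (by norm_num)]
    _ ≤ ENNReal.ofReal 2⁻¹ * (ENNReal.ofReal ((w r)⁻¹) * Lint w ψ₁ ψ₂) := by
        refine mul_le_mul' le_rfl ((h2.trans (h3.trans_eq h5)).trans ?_)
        exact mul_le_mul' le_rfl h6
    _ = ENNReal.ofReal (2⁻¹ * (w r)⁻¹) * Lint w ψ₁ ψ₂ := by
        rw [← mul_assoc, ← ENNReal.ofReal_mul (by norm_num)]

lemma atheta_zero {w : ℝ → ℝ} (hpos : ∀ r, 0 < r → 0 < w r)
    (hanti : ∀ r s, 0 < r → r ≤ s → w s ≤ w r) (ψ₁ ψ₂ : ℝ → ℂ)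
    (hL : Lint w ψ₁ ψ₂ = 0) {r : ℝ} (hr : 0 < r) : Atheta2 ψ₁ ψ₂ r = 0 := by
  have h := atheta_bound hpos hanti ψ₁ ψ₂ hr
  rw [hL, mul_zero, le_zero_iff, ENNReal.ofReal_eq_zero] at h
  exact abs_nonpos_iff.1 h

lemma eLpNorm_eq {w : ℝ → ℝ} (hpos : ∀ r, 0 < r → 0 < w r) (ψ₁ ψ₂ : ℝ → ℂ) :
    eLpNorm (fun r => ((w r : ℝ) : ℂ) * (ψ₁ r * ψ₂ r)) 1 rmeas
      = ENNReal.ofReal (2 * Real.pi) * Lint w ψ₁ ψ₂ := by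
  rw [eLpNorm_one_eq_lintegral_enorm, rmeas,
    lintegral_withDensity_eq_lintegral_mul_non_measurable _
      (by fun_prop : Measurable fun r : ℝ => ENNReal.ofReal (2 * Real.pi * r))
      (.of_forall fun x => ENNReal.ofReal_lt_top)]
  have hcongr : ∀ᵐ t ∂(volume.restrict (Ioi (0:ℝ))),
      ((fun r => ENNReal.ofReal (2 * Real.pi * r)) *
        fun t => ‖((w t : ℝ) : ℂ) * (ψ₁ t * ψ₂ t)‖ₑ) t
        = ENNReal.ofReal (2 * Real.pi) * ENNReal.ofReal (gfun w ψ₁ ψ₂ t) := by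
    refine (ae_restrict_iff' measurableSet_Ioi).2 (.of_forall fun t ht => ?_)
    have ht0 : 0 < t := ht
    have hwt := hpos t ht0
    have hnorm : ‖((w t : ℝ) : ℂ) * (ψ₁ t * ψ₂ t)‖ = w t * ‖ψ₁ t * ψ₂ t‖ := by
      rw [norm_mul, Complex.norm_real, Real.norm_eq_abs, abs_of_pos hwt]
    simp only [Pi.mul_apply]
    rw [← ofReal_norm, hnorm,
      ← ENNReal.ofReal_mul (by positivity), ← ENNReal.ofReal_mul (by positivity)]
    congr 1
    rw [gfun]; ring
  rw [lintegral_congr_ae hcongr, lintegral_const_mul' _ _ ENNReal.ofReal_ne_top, Lint]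

lemma top_helper (a b c d : ℝ≥0∞) (ha : a ≠ 0) (hb : b ≠ 0) (hc : c ≠ 0) (hd : d ≠ 0)
    (h : b = ⊤ ∨ c = ⊤ ∨ d = ⊤) : a * b * c * d = ⊤ := by
  rcases h with h | h | h <;> subst h
  · rw [ENNReal.mul_top ha, ENNReal.top_mul hc, ENNReal.top_mul hd]
  · rw [ENNReal.mul_top (mul_ne_zero ha hb), ENNReal.top_mul hd]
  · rw [ENNReal.mul_top (mul_ne_zero (mul_ne_zero ha hb) hc)]

/-- Duality estimate (weighted `L¹`-type) for `M₆`. -/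
theorem duality_estimate_M6_weighted :
    ∃ C : ℝ, 0 < C ∧
      ∀ w₁₂ w₃₄ w₅₆ : ℝ → ℝ,
        (∀ r : ℝ, 0 < r → 0 < w₁₂ r) → (∀ r : ℝ, 0 < r → 0 < w₃₄ r) →
        (∀ r : ℝ, 0 < r → 0 < w₅₆ r) →
        (∀ r s : ℝ, 0 < r → r ≤ s → w₁₂ s ≤ w₁₂ r) →
        (∀ r s : ℝ, 0 < r → r ≤ s → w₃₄ s ≤ w₃₄ r) →
        (∀ r s : ℝ, 0 < r → r ≤ s → w₅₆ s ≤ w₅₆ r) →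
        (∀ r : ℝ, 0 < r → w₁₂ r * w₃₄ r * w₅₆ r = (r ^ 2)⁻¹) →
        ∀ ψ₁ ψ₂ ψ₃ ψ₄ ψ₅ ψ₆ : ℝ → ℂ,
          Measurable ψ₁ → Measurable ψ₂ → Measurable ψ₃ → Measurable ψ₄ →
          Measurable ψ₅ → Measurable ψ₆ →
          ENNReal.ofReal |M6 ψ₁ ψ₂ ψ₃ ψ₄ ψ₅ ψ₆| ≤
            ENNReal.ofReal C
              * eLpNorm (fun r => ((w₁₂ r : ℝ) : ℂ) * (ψ₁ r * ψ₂ r)) 1 rmeas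
              * eLpNorm (fun r => ((w₃₄ r : ℝ) : ℂ) * (ψ₃ r * ψ₄ r)) 1 rmeas
              * eLpNorm (fun r => ((w₅₆ r : ℝ) : ℂ) * (ψ₅ r * ψ₆ r)) 1 rmeas := by
  refine ⟨1, one_pos, ?_⟩
  intro w₁₂ w₃₄ w₅₆ h12p h34p h56p h12a h34a h56a hprod ψ₁ ψ₂ ψ₃ ψ₄ ψ₅ ψ₆ hm1 hm2 hm3 hm4 hm5 hm6
  rw [eLpNorm_eq h12p, eLpNorm_eq h34p, eLpNorm_eq h56p]
  set L12 := Lint w₁₂ ψ₁ ψ₂ with hL12def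
  set L34 := Lint w₃₄ ψ₃ ψ₄ with hL34def
  set L56 := Lint w₅₆ ψ₅ ψ₆ with hL56def
  set F : ℝ → ℝ := fun r =>
    (r ^ 2)⁻¹ * Atheta2 ψ₁ ψ₂ r * Atheta2 ψ₃ ψ₄ r * Re2 ψ₅ ψ₆ r * r with hF
  have hM6 : M6 ψ₁ ψ₂ ψ₃ ψ₄ ψ₅ ψ₆ = Real.pi * ∫ r in Ioi (0:ℝ), F r := by
    rw [M6]; ring
  -- zero cases
  by_cases h120 : L12 = 0
  · have hF0 : EqOn F (fun _ => (0:ℝ)) (Ioi (0:ℝ)) := by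
      intro r hr
      have := atheta_zero h12p h12a ψ₁ ψ₂ h120 (mem_Ioi.1 hr)
      simp [hF, this]
    have hI : (∫ r in Ioi (0:ℝ), F r) = 0 := by
      rw [setIntegral_congr_fun measurableSet_Ioi hF0]; simp
    rw [hM6, hI, mul_zero, abs_zero, ENNReal.ofReal_zero]
    exact zero_le
  by_cases h340 : L34 = 0
  · have hF0 : EqOn F (fun _ => (0:ℝ)) (Ioi (0:ℝ)) := by
      intro r hr
      have := atheta_zero h34p h34a ψ₃ ψ₄ h340 (mem_Ioi.1 hr)
      simp [hF, this]
    have hI : (∫ r in Ioi (0:ℝ), F r) = 0 := by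
      rw [setIntegral_congr_fun measurableSet_Ioi hF0]; simp
    rw [hM6, hI, mul_zero, abs_zero, ENNReal.ofReal_zero]
    exact zero_le
  by_cases h560 : L56 = 0
  · have hw : AEMeasurable w₅₆ (volume.restrict (Ioi (0:ℝ))) :=
      aemeasurable_restrict_of_antitoneOn measurableSet_Ioi
        (fun r hr s _ hrs => h56a r s hr hrs)
    have haem : AEMeasurable (fun t => ENNReal.ofReal (gfun w₅₆ ψ₅ ψ₆ t))
        (volume.restrict (Ioi (0:ℝ))) := by
      refine ENNReal.measurable_ofReal.comp_aemeasurable ?_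
      exact (((continuous_norm.measurable.comp (hm5.mul hm6)).aemeasurable.mul
        measurable_id.aemeasurable).mul hw)
    have hae : ∀ᵐ t ∂(volume.restrict (Ioi (0:ℝ))),
        ENNReal.ofReal (gfun w₅₆ ψ₅ ψ₆ t) = 0 := (lintegral_eq_zero_iff' haem).1 h560
    have hae2 : F =ᵐ[volume.restrict (Ioi (0:ℝ))] (fun _ => (0:ℝ)) := by
      filter_upwards [hae, ae_restrict_mem measurableSet_Ioi] with t h1 h2
      have ht : (0:ℝ) < t := h2
      have hwt := h56p t ht
      rw [ENNReal.ofReal_eq_zero, gfun] at h1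
      have habs : ‖ψ₅ t * ψ₆ t‖ = 0 := by
        have hnn : 0 ≤ ‖ψ₅ t * ψ₆ t‖ := norm_nonneg _
        by_contra hne
        have ha : 0 < ‖ψ₅ t * ψ₆ t‖ := lt_of_le_of_ne hnn (Ne.symm hne)
        exact absurd h1 (not_le.2 (mul_pos (mul_pos ha ht) hwt))
      have hre : Re2 ψ₅ ψ₆ t = 0 := by
        have := (abs_Re2_le ψ₅ ψ₆ t).trans_eq habs
        exact abs_nonpos_iff.1 this
      simp [hF, hre]
    have hI : (∫ r in Ioi (0:ℝ), F r) = 0 := by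
      rw [integral_congr_ae hae2]; simp
    rw [hM6, hI, mul_zero, abs_zero, ENNReal.ofReal_zero]
    exact zero_le
  -- top case
  have hc2π : ENNReal.ofReal (2 * Real.pi) ≠ 0 := by
    simp only [ne_eq, ENNReal.ofReal_eq_zero, not_le]
    positivity
  by_cases htop : L12 = ⊤ ∨ L34 = ⊤ ∨ L56 = ⊤
  · refine le_top.trans (le_of_eq ?_)
    refine (top_helper _ _ _ _ ?_ (mul_ne_zero hc2π h120) (mul_ne_zero hc2π h340)
      (mul_ne_zero hc2π h560) ?_).symm
    · simp
    · rcases htop with h | h | h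
      · exact Or.inl (by rw [h, ENNReal.mul_top hc2π])
      · exact Or.inr (Or.inl (by rw [h, ENNReal.mul_top hc2π]))
      · exact Or.inr (Or.inr (by rw [h, ENNReal.mul_top hc2π]))
  push_neg at htop
  obtain ⟨ht12, ht34, ht56⟩ := htop
  -- main pointwise bound
  have hFb : ∀ r ∈ Ioi (0:ℝ), ENNReal.ofReal |F r| ≤
      (ENNReal.ofReal 4⁻¹ * L12 * L34) * ENNReal.ofReal (gfun w₅₆ ψ₅ ψ₆ r) := by
    intro r hr
    have hr0 : (0:ℝ) < r := hr
    have hw12 := h12p r hr0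
    have hw34 := h34p r hr0
    have hw56 := h56p r hr0
    have hA12 := atheta_bound h12p h12a ψ₁ ψ₂ hr0
    have hA34 := atheta_bound h34p h34a ψ₃ ψ₄ hr0
    have n1 : (0:ℝ) ≤ (r ^ 2)⁻¹ := by positivity
    have n2 : (0:ℝ) ≤ 2⁻¹ * (w₁₂ r)⁻¹ := le_of_lt (by
      exact mul_pos (by norm_num) (inv_pos.2 hw12))
    have n3 : (0:ℝ) ≤ 2⁻¹ * (w₃₄ r)⁻¹ := le_of_lt (by
      exact mul_pos (by norm_num) (inv_pos.2 hw34))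
    have hsplit : ENNReal.ofReal |F r| =
        ENNReal.ofReal ((r ^ 2)⁻¹) * ENNReal.ofReal |Atheta2 ψ₁ ψ₂ r| *
          ENNReal.ofReal |Atheta2 ψ₃ ψ₄ r| * ENNReal.ofReal (|Re2 ψ₅ ψ₆ r| * r) := by
      rw [hF]
      have : |(r ^ 2)⁻¹ * Atheta2 ψ₁ ψ₂ r * Atheta2 ψ₃ ψ₄ r * Re2 ψ₅ ψ₆ r * r|
          = (r ^ 2)⁻¹ * |Atheta2 ψ₁ ψ₂ r| * |Atheta2 ψ₃ ψ₄ r| * (|Re2 ψ₅ ψ₆ r| * r) := by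
        rw [abs_mul, abs_mul, abs_mul, abs_mul, abs_of_nonneg n1, abs_of_pos hr0]
        ring
      rw [this, ENNReal.ofReal_mul (by positivity), ENNReal.ofReal_mul (by positivity),
        ENNReal.ofReal_mul n1]
    have hreal : (r ^ 2)⁻¹ * (2⁻¹ * (w₁₂ r)⁻¹) * (2⁻¹ * (w₃₄ r)⁻¹) * (|Re2 ψ₅ ψ₆ r| * r)
        ≤ 4⁻¹ * gfun w₅₆ ψ₅ ψ₆ r := by
      have hkey : (r ^ 2)⁻¹ * (w₁₂ r)⁻¹ * (w₃₄ r)⁻¹ = w₅₆ r := by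
        rw [← hprod r hr0]
        field_simp
      have hre := abs_Re2_le ψ₅ ψ₆ r
      calc (r ^ 2)⁻¹ * (2⁻¹ * (w₁₂ r)⁻¹) * (2⁻¹ * (w₃₄ r)⁻¹) * (|Re2 ψ₅ ψ₆ r| * r)
          = 4⁻¹ * (((r ^ 2)⁻¹ * (w₁₂ r)⁻¹ * (w₃₄ r)⁻¹) * (|Re2 ψ₅ ψ₆ r| * r)) := by ring
        _ = 4⁻¹ * (w₅₆ r * (|Re2 ψ₅ ψ₆ r| * r)) := by rw [hkey]
        _ ≤ 4⁻¹ * (w₅₆ r * (‖ψ₅ r * ψ₆ r‖ * r)) := by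
            refine mul_le_mul_of_nonneg_left (mul_le_mul_of_nonneg_left
              (mul_le_mul_of_nonneg_right hre hr0.le) hw56.le) (by norm_num)
        _ = 4⁻¹ * gfun w₅₆ ψ₅ ψ₆ r := by rw [gfun]; ring
    calc ENNReal.ofReal |F r|
        = ENNReal.ofReal ((r ^ 2)⁻¹) * ENNReal.ofReal |Atheta2 ψ₁ ψ₂ r| *
            ENNReal.ofReal |Atheta2 ψ₃ ψ₄ r| * ENNReal.ofReal (|Re2 ψ₅ ψ₆ r| * r) := hsplit
      _ ≤ ENNReal.ofReal ((r ^ 2)⁻¹) * (ENNReal.ofReal (2⁻¹ * (w₁₂ r)⁻¹) * L12) *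
            (ENNReal.ofReal (2⁻¹ * (w₃₄ r)⁻¹) * L34) * ENNReal.ofReal (|Re2 ψ₅ ψ₆ r| * r) := by
          exact mul_le_mul' (mul_le_mul' (mul_le_mul' le_rfl hA12) hA34) le_rfl
      _ = (ENNReal.ofReal ((r ^ 2)⁻¹) * ENNReal.ofReal (2⁻¹ * (w₁₂ r)⁻¹) *
            ENNReal.ofReal (2⁻¹ * (w₃₄ r)⁻¹) * ENNReal.ofReal (|Re2 ψ₅ ψ₆ r| * r)) *
            (L12 * L34) := by ring
      _ = ENNReal.ofReal ((r ^ 2)⁻¹ * (2⁻¹ * (w₁₂ r)⁻¹) * (2⁻¹ * (w₃₄ r)⁻¹) *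
            (|Re2 ψ₅ ψ₆ r| * r)) * (L12 * L34) := by
          rw [← ENNReal.ofReal_mul n1, ← ENNReal.ofReal_mul (mul_nonneg n1 n2),
            ← ENNReal.ofReal_mul (mul_nonneg (mul_nonneg n1 n2) n3)]
      _ ≤ ENNReal.ofReal (4⁻¹ * gfun w₅₆ ψ₅ ψ₆ r) * (L12 * L34) :=
          mul_le_mul' (ENNReal.ofReal_le_ofReal hreal) le_rfl
      _ = (ENNReal.ofReal 4⁻¹ * L12 * L34) * ENNReal.ofReal (gfun w₅₆ ψ₅ ψ₆ r) := by
          rw [ENNReal.ofReal_mul (by norm_num)]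
          ring
  have hconst_ne_top : (ENNReal.ofReal 4⁻¹ * L12 * L34) ≠ ⊤ :=
    ENNReal.mul_ne_top (ENNReal.mul_ne_top ENNReal.ofReal_ne_top ht12) ht34
  have hInt : (∫⁻ r in Ioi (0:ℝ), ENNReal.ofReal |F r|) ≤
      ENNReal.ofReal 4⁻¹ * L12 * L34 * L56 := by
    have step : (∫⁻ r in Ioi (0:ℝ), ENNReal.ofReal |F r|) ≤
        ∫⁻ r in Ioi (0:ℝ), (ENNReal.ofReal 4⁻¹ * L12 * L34) *
          ENNReal.ofReal (gfun w₅₆ ψ₅ ψ₆ r) :=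
      lintegral_mono_ae ((ae_restrict_iff' measurableSet_Ioi).2 (.of_forall hFb))
    rwa [lintegral_const_mul' _ _ hconst_ne_top] at step
  have hIM : ENNReal.ofReal |M6 ψ₁ ψ₂ ψ₃ ψ₄ ψ₅ ψ₆| ≤
      ENNReal.ofReal Real.pi * ∫⁻ r in Ioi (0:ℝ), ENNReal.ofReal |F r| := by
    rw [hM6, abs_mul, abs_of_nonneg Real.pi_pos.le,
      ENNReal.ofReal_mul Real.pi_pos.le]
    refine mul_le_mul' le_rfl ?_
    have h := norm_integral_le_lintegral_norm (μ := volume.restrict (Ioi (0:ℝ))) F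
    simp only [Real.norm_eq_abs] at h
    exact le_trans (ENNReal.ofReal_le_ofReal h) ENNReal.ofReal_toReal_le
  have hconst : ENNReal.ofReal Real.pi * ENNReal.ofReal 4⁻¹ ≤
      ENNReal.ofReal 1 * ENNReal.ofReal (2 * Real.pi) ^ 3 := by
    rw [← ENNReal.ofReal_mul Real.pi_pos.le, ← ENNReal.ofReal_pow (by positivity),
      ← ENNReal.ofReal_mul (by norm_num)]
    refine ENNReal.ofReal_le_ofReal ?_
    nlinarith [Real.pi_gt_three, mul_pos Real.pi_pos Real.pi_pos,
      mul_pos (mul_pos Real.pi_pos Real.pi_pos) Real.pi_pos]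
  calc ENNReal.ofReal |M6 ψ₁ ψ₂ ψ₃ ψ₄ ψ₅ ψ₆|
      ≤ ENNReal.ofReal Real.pi * (ENNReal.ofReal 4⁻¹ * L12 * L34 * L56) :=
        hIM.trans (mul_le_mul' le_rfl hInt)
    _ = (ENNReal.ofReal Real.pi * ENNReal.ofReal 4⁻¹) * (L12 * L34 * L56) := by ring
    _ ≤ (ENNReal.ofReal 1 * ENNReal.ofReal (2 * Real.pi) ^ 3) * (L12 * L34 * L56) :=
        mul_le_mul' hconst le_rfl
    _ = ENNReal.ofReal 1 * (ENNReal.ofReal (2 * Real.pi) * L12) *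
          (ENNReal.ofReal (2 * Real.pi) * L34) * (ENNReal.ofReal (2 * Real.pi) * L56) := by
        ring
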